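/- arXiv:1204.1126 — 2 statements merged into one kernel-verified Lean document; each statement's English description precedes it below -/
import Mathlib

section
/- Let $B = \{B_t\}$ be an $n \times d$ matrix of independent standard Brownian motions and set $X_t = B_t^\top B_t$. Then $X$ is a positive semidefinite matrix-valued process satisfying $dX_t = n I_d\,dt + \sqrt{X_t}\,dW_t + dW_t^\top \sqrt{X_t}$ for some $d \times d$ matrix Brownian motion $W$; i.e. $X$ is a Wishart process $WIS_d(B_0^\top B_0, n, 0, I_d)$. -/
open Real MeasureTheory ProbabilityTheory Filter Set

noncomputable section

/-- A standard one-dimensional Brownian motion: starts at `0` a.s., has continuous paths,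
Gaussian increments `W_t - W_s ~ N(0, t-s)`, and independent increments. -/
structure IsStdBrownianMotion {Ω : Type*} [MeasurableSpace Ω] (μ : Measure Ω)
    (W : ℝ → Ω → ℝ) : Prop where
  start : ∀ᵐ ω ∂μ, W 0 ω = 0
  cont : ∀ᵐ ω ∂μ, Continuous fun t => W t ω
  meas : ∀ t, Measurable (W t)
  incr : ∀ s t : ℝ, 0 ≤ s → s ≤ t →
    Measure.map (fun ω => W t ω - W s ω) μ = gaussianReal 0 (Real.toNNReal (t - s))
  indep : ∀ t : ℕ → ℝ, (∀ n, 0 ≤ t n) → Monotone t →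
    iIndepFun
      (fun n ω => W (t (n + 1)) ω - W (t n) ω) μ

/-- A local martingale indexed by `ℝ` with respect to the filtration `F`: there is a localizing
sequence of stopping times tending to infinity such that each stopped process is a
martingale. -/
def IsLocalMartingale {Ω : Type*} {m : MeasurableSpace Ω} (F : Filtration ℝ m)
    (X : ℝ → Ω → ℝ) (μ : Measure Ω) : Prop :=
  ∃ τ : ℕ → Ω → ℝ, (∀ n, IsStoppingTime F (fun ω => ((τ n ω : ℝ) : WithTop ℝ))) ∧
    (∀ ω, Tendsto (fun n => τ n ω) atTop atTop) ∧
    ∀ n, Martingale (MeasureTheory.stoppedProcess X (fun ω => ((τ n ω : ℝ) : WithTop ℝ))) F μ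

/-- Martingale-problem formulation of the one-dimensional SDE
`dX_t = drift_t dt + diff_t dW_t`: for every `C²` function `f`, the process
`f(X_t) - ∫₀ᵗ (drift_s f'(X_s) + ½ diff_s² f''(X_s)) ds` is a local martingale. -/
def SolvesSDE {Ω : Type*} {m : MeasurableSpace Ω} (F : Filtration ℝ m)
    (X drift diff : ℝ → Ω → ℝ) (μ : Measure Ω) : Prop :=
  ∀ f : ℝ → ℝ, ContDiff ℝ 2 f →
    IsLocalMartingale F (fun t ω => f (X t ω) -
      ∫ s in (0:ℝ)..t,
        (drift s ω * deriv f (X s ω) +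
          (1 / 2) * diff s ω ^ 2 * iteratedDeriv 2 f (X s ω))) μ

/-- Martingale-problem formulation of a multidimensional SDE with drift process `drift` and
diffusion (quadratic covariation rate) matrix process `covar`: for every `C²` function `f`,
`f(X_t) - ∫₀ᵗ (∑ᵢ driftᵢ ∂ᵢf + ½ ∑ᵢⱼ covarᵢⱼ ∂ᵢⱼf)(X_s) ds` is a local martingale. -/
def SolvesSDEVec {Ω : Type*} {m : MeasurableSpace Ω} {ι : Type*} [Fintype ι] [DecidableEq ι]
    (F : Filtration ℝ m) (X : ℝ → Ω → ι → ℝ) (drift : ℝ → Ω → ι → ℝ)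
    (covar : ℝ → Ω → Matrix ι ι ℝ) (μ : Measure Ω) : Prop :=
  ∀ f : (ι → ℝ) → ℝ, ContDiff ℝ 2 f →
    IsLocalMartingale F (fun t ω => f (X t ω) -
      ∫ s in (0:ℝ)..t,
        ((∑ i, drift s ω i * fderiv ℝ f (X s ω) (Pi.single i 1)) +
          (1 / 2) * ∑ i, ∑ j, covar s ω i j *
            fderiv ℝ (fun y => fderiv ℝ f y (Pi.single i 1)) (X s ω) (Pi.single j 1))) μ

/-- The quadratic map `b ↦ bᵀb` on matrices viewed as pi types. -/
def Qmap (n d : ℕ) (b : (Fin n × Fin d) → ℝ) : (Fin d × Fin d) → ℝ :=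
  fun p => ∑ k, b (k, p.1) * b (k, p.2)

/-- The derivative of `Qmap` at `b`, as a linear map. -/
def Llin (n d : ℕ) (b : (Fin n × Fin d) → ℝ) :
    ((Fin n × Fin d) → ℝ) →ₗ[ℝ] ((Fin d × Fin d) → ℝ) where
  toFun h := fun p => ∑ k, (h (k, p.1) * b (k, p.2) + b (k, p.1) * h (k, p.2))
  map_add' h h' := by
    funext p
    simp only [Pi.add_apply]
    rw [← Finset.sum_add_distrib]
    refine Finset.sum_congr rfl fun k _ => ?_
    ring
  map_smul' c h := by
    funext p
    simp only [RingHom.id_apply, Pi.smul_apply, smul_eq_mul, Finset.mul_sum]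
    refine Finset.sum_congr rfl fun k _ => ?_
    ring

def Lclm (n d : ℕ) (b : (Fin n × Fin d) → ℝ) :
    ((Fin n × Fin d) → ℝ) →L[ℝ] ((Fin d × Fin d) → ℝ) :=
  (Llin n d b).toContinuousLinearMap

lemma Lclm_apply (b h : (Fin n × Fin d) → ℝ) (p : Fin d × Fin d) :
    Lclm n d b h p = ∑ k, (h (k, p.1) * b (k, p.2) + b (k, p.1) * h (k, p.2)) := rfl

lemma Lclm_symm (b h : (Fin n × Fin d) → ℝ) : Lclm n d b h = Lclm n d h b := by
  funext p
  rw [Lclm_apply, Lclm_apply]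
  exact Finset.sum_congr rfl fun k _ => by ring

lemma hasFDerivAt_Qmap (b : (Fin n × Fin d) → ℝ) :
    HasFDerivAt (Qmap n d) (Lclm n d b) b := by
  rw [hasFDerivAt_pi']
  intro p
  have : ∀ k : Fin n, HasFDerivAt (fun b : (Fin n × Fin d) → ℝ => b (k, p.1) * b (k, p.2))
      ((b (k, p.2)) • ContinuousLinearMap.proj (R := ℝ) (k, p.1)
        + (b (k, p.1)) • ContinuousLinearMap.proj (R := ℝ) (k, p.2)) b := by
    intro k
    have h1 := hasFDerivAt_apply (𝕜 := ℝ) ((k, p.1) : Fin n × Fin d) b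
    have h2 := hasFDerivAt_apply (𝕜 := ℝ) ((k, p.2) : Fin n × Fin d) b
    have := h1.fun_mul h2
    refine this.congr_fderiv ?_
    ext h
    simp only [ContinuousLinearMap.add_apply, ContinuousLinearMap.smul_apply,
      ContinuousLinearMap.proj_apply, smul_eq_mul]
    ring
  have hs := HasFDerivAt.fun_sum (fun k (_ : k ∈ Finset.univ) => this k)
  convert hs using 1
  · rfl
  ext h
  simp [Lclm_apply, Finset.sum_add_distrib, mul_comm]

lemma contDiff_Qmap : ContDiff ℝ 2 (Qmap n d) := by
  rw [contDiff_pi]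
  intro p
  exact ContDiff.sum fun k _ =>
    (contDiff_apply ℝ ℝ ((k, p.1) : Fin n × Fin d)).mul
      (contDiff_apply ℝ ℝ ((k, p.2) : Fin n × Fin d))

end

section deriv
variable {n d : ℕ} {f : ((Fin d × Fin d) → ℝ) → ℝ} (hf : ContDiff ℝ 2 f)

include hf

lemma fderiv_comp_Qmap (x : (Fin n × Fin d) → ℝ) (v : (Fin n × Fin d) → ℝ) :
    fderiv ℝ (fun b => f (Qmap n d b)) x v = fderiv ℝ f (Qmap n d x) (Lclm n d x v) := by
  have h : HasFDerivAt (fun b => f (Qmap n d b))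
      ((fderiv ℝ f (Qmap n d x)).comp (Lclm n d x)) x :=
    ((hf.differentiable two_ne_zero (Qmap n d x)).hasFDerivAt).comp x (hasFDerivAt_Qmap x)
  rw [h.fderiv]; rfl

lemma hasFDerivAt_fderiv_comp (x : (Fin n × Fin d) → ℝ) :
    HasFDerivAt (fun y => fderiv ℝ f (Qmap n d y))
      ((fderiv ℝ (fderiv ℝ f) (Qmap n d x)).comp (Lclm n d x)) x := by
  have hdf : DifferentiableAt ℝ (fderiv ℝ f) (Qmap n d x) :=
    ((hf.fderiv_right (m := 1) (by norm_num)).differentiable one_ne_zero) _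
  exact hdf.hasFDerivAt.comp x (hasFDerivAt_Qmap x)

lemma fderiv2_comp_Qmap (x v w : (Fin n × Fin d) → ℝ) :
    fderiv ℝ (fun y => fderiv ℝ (fun b => f (Qmap n d b)) y v) x w
      = fderiv ℝ f (Qmap n d x) (Lclm n d v w)
        + fderiv ℝ (fderiv ℝ f) (Qmap n d x) (Lclm n d x w) (Lclm n d x v) := by
  have heq : (fun y => fderiv ℝ (fun b => f (Qmap n d b)) y v)
      = fun y => (fderiv ℝ f (Qmap n d y)) (Lclm n d y v) := by
    funext y; exact fderiv_comp_Qmap hf y v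
  rw [heq]
  have hu : HasFDerivAt (fun y => Lclm n d y v) (Lclm n d v) x := by
    have : (fun y => Lclm n d y v) = fun y => Lclm n d v y := by
      funext y; exact Lclm_symm y v
    rw [this]
    exact (Lclm n d v).hasFDerivAt
  have h := (hasFDerivAt_fderiv_comp hf x).clm_apply hu
  rw [h.fderiv]
  simp [ContinuousLinearMap.comp_apply, ContinuousLinearMap.flip_apply]

omit hf in
lemma fderiv_apply_const (hf2 : ContDiff ℝ 2 f) (z v w : (Fin d × Fin d) → ℝ) :
    fderiv ℝ (fun y => fderiv ℝ f y v) z w = fderiv ℝ (fderiv ℝ f) z w v := by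
  have hc : DifferentiableAt ℝ (fderiv ℝ f) z :=
    ((hf2.fderiv_right (m := 1) (by norm_num)).differentiable one_ne_zero) _
  have hu : HasFDerivAt (fun _ : (Fin d × Fin d) → ℝ => v) (0 : _ →L[ℝ] _) z :=
    hasFDerivAt_const v z
  have h := hc.hasFDerivAt.clm_apply hu
  rw [h.fderiv]
  simp

end deriv

section parts
variable {n d : ℕ}

lemma Lclm_single_self (q : Fin n × Fin d) :
    Lclm n d (Pi.single q 1) (Pi.single q 1)
      = Pi.single ((q.2, q.2) : Fin d × Fin d) (2:ℝ) := by
  funext p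
  rw [Lclm_apply]
  have hterm : ∀ k : Fin n,
      ((Pi.single q 1 : (Fin n × Fin d) → ℝ) (k, p.1)
          * (Pi.single q 1 : (Fin n × Fin d) → ℝ) (k, p.2)
        + (Pi.single q 1 : (Fin n × Fin d) → ℝ) (k, p.1)
          * (Pi.single q 1 : (Fin n × Fin d) → ℝ) (k, p.2))
      = if q.1 = k ∧ p = (q.2, q.2) then (2:ℝ) else 0 := by
    intro k
    by_cases hk : q.1 = k
    · by_cases h1 : p.1 = q.2
      · by_cases h2 : p.2 = q.2
        · have e1 : ((k, p.1) : Fin n × Fin d) = q := Prod.ext hk.symm h1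
          have e2 : ((k, p.2) : Fin n × Fin d) = q := Prod.ext hk.symm h2
          have hp : p = (q.2, q.2) := Prod.ext h1 h2
          rw [e1, e2, Pi.single_eq_same, if_pos ⟨hk, hp⟩]
          norm_num
        · have e2 : ((k, p.2) : Fin n × Fin d) ≠ q := fun hc => h2 (by rw [← hc])
          have hp : ¬(q.1 = k ∧ p = (q.2, q.2)) := fun h => h2 (by rw [h.2])
          rw [Pi.single_eq_of_ne e2, if_neg hp]
          ring
      · have e1 : ((k, p.1) : Fin n × Fin d) ≠ q := fun hc => h1 (by rw [← hc])
        have hp : ¬(q.1 = k ∧ p = (q.2, q.2)) := fun h => h1 (by rw [h.2])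
        rw [Pi.single_eq_of_ne e1, if_neg hp]
        ring
    · have e1 : ((k, p.1) : Fin n × Fin d) ≠ q := fun hc => hk (by rw [← hc])
      have hp : ¬(q.1 = k ∧ p = (q.2, q.2)) := fun h => hk h.1
      rw [Pi.single_eq_of_ne e1, if_neg hp]
      ring
  simp only [hterm]
  by_cases hp : p = (q.2, q.2)
  · subst hp
    simp only [and_true]
    rw [Finset.sum_ite_eq, if_pos (Finset.mem_univ q.1), Pi.single_eq_same]
  · simp only [hp, and_false, if_false, Finset.sum_const_zero]
    rw [Pi.single_eq_of_ne hp]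

lemma partA (D1 : ((Fin d × Fin d) → ℝ) →L[ℝ] ℝ) :
    (1/2:ℝ) * ∑ q : Fin n × Fin d, D1 (Lclm n d (Pi.single q 1) (Pi.single q 1))
      = ∑ p : Fin d × Fin d, (if p.1 = p.2 then (n:ℝ) else 0) * D1 (Pi.single p 1) := by
  have h1 : ∀ q : Fin n × Fin d, D1 (Lclm n d (Pi.single q 1) (Pi.single q 1))
      = 2 * D1 (Pi.single ((q.2, q.2) : Fin d × Fin d) (1:ℝ)) := by
    intro q
    rw [Lclm_single_self]
    have h2 : (Pi.single ((q.2, q.2) : Fin d × Fin d) (2:ℝ))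
        = (2:ℝ) • ((Pi.single ((q.2, q.2) : Fin d × Fin d) (1:ℝ)) : (Fin d × Fin d) → ℝ) := by
      rw [← Pi.single_smul]; norm_num
    rw [h2, _root_.map_smul, smul_eq_mul]
  have hLHS : (1/2:ℝ) * ∑ q : Fin n × Fin d, D1 (Lclm n d (Pi.single q 1) (Pi.single q 1))
      = ∑ i : Fin d, (n:ℝ) * D1 (Pi.single ((i, i) : Fin d × Fin d) 1) := by
    simp only [h1]
    rw [Fintype.sum_prod_type]
    dsimp only
    rw [Finset.sum_const, Finset.card_univ, Fintype.card_fin,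
      nsmul_eq_mul, Finset.mul_sum, Finset.mul_sum]
    exact Finset.sum_congr rfl fun i _ => by ring
  have hRHS : (∑ p : Fin d × Fin d, (if p.1 = p.2 then (n:ℝ) else 0) * D1 (Pi.single p 1))
      = ∑ i : Fin d, (n:ℝ) * D1 (Pi.single ((i, i) : Fin d × Fin d) 1) := by
    rw [Fintype.sum_prod_type]
    refine Finset.sum_congr rfl fun i _ => ?_
    simp only [ite_mul, zero_mul]
    rw [Finset.sum_ite_eq, if_pos (Finset.mem_univ i)]
  rw [hLHS, hRHS]

/-- coefficient of `Pi.single p 1` in `Lclm x (Pi.single q 1)` -/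
def coe1 (x : (Fin n × Fin d) → ℝ) (q : Fin n × Fin d) (p : Fin d × Fin d) : ℝ :=
  (if p.1 = q.2 then x (q.1, p.2) else 0) + (if p.2 = q.2 then x (q.1, p.1) else 0)

lemma Lclm_single_eq (x : (Fin n × Fin d) → ℝ) (q : Fin n × Fin d) :
    Lclm n d x (Pi.single q 1)
      = ∑ p : Fin d × Fin d, coe1 x q p • (Pi.single p 1 : (Fin d × Fin d) → ℝ) := by
  funext p'
  have hrhs : (∑ p : Fin d × Fin d, coe1 x q p • (Pi.single p 1 : (Fin d × Fin d) → ℝ)) p'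
      = coe1 x q p' := by
    rw [Finset.sum_apply]
    simp only [Pi.smul_apply, Pi.single_apply, smul_eq_mul, mul_ite, mul_one, mul_zero]
    rw [Finset.sum_ite_eq, if_pos (Finset.mem_univ p')]
  rw [hrhs, Lclm_apply, coe1]
  rw [Finset.sum_add_distrib]
  congr 1
  · by_cases h : p'.1 = q.2
    · rw [if_pos h]
      have : ∀ k : Fin n, (Pi.single q 1 : (Fin n × Fin d) → ℝ) (k, p'.1) * x (k, p'.2)
          = if q.1 = k then x (k, p'.2) else 0 := by
        intro k
        by_cases hk : q.1 = k
        · have e : ((k, p'.1) : Fin n × Fin d) = q := Prod.ext hk.symm h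
          rw [e, Pi.single_eq_same, if_pos hk, one_mul]
        · have e : ((k, p'.1) : Fin n × Fin d) ≠ q := fun hc => hk (by rw [← hc])
          rw [Pi.single_eq_of_ne e, if_neg hk, zero_mul]
      simp only [this]
      rw [Finset.sum_ite_eq, if_pos (Finset.mem_univ q.1)]
    · rw [if_neg h]
      refine Finset.sum_eq_zero fun k _ => ?_
      have e : ((k, p'.1) : Fin n × Fin d) ≠ q := fun hc => h (by rw [← hc])
      rw [Pi.single_eq_of_ne e, zero_mul]
  · by_cases h : p'.2 = q.2
    · rw [if_pos h]
      have : ∀ k : Fin n, x (k, p'.1) * (Pi.single q 1 : (Fin n × Fin d) → ℝ) (k, p'.2)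
          = if q.1 = k then x (k, p'.1) else 0 := by
        intro k
        by_cases hk : q.1 = k
        · have e : ((k, p'.2) : Fin n × Fin d) = q := Prod.ext hk.symm h
          rw [e, Pi.single_eq_same, if_pos hk, mul_one]
        · have e : ((k, p'.2) : Fin n × Fin d) ≠ q := fun hc => hk (by rw [← hc])
          rw [Pi.single_eq_of_ne e, if_neg hk, mul_zero]
      simp only [this]
      rw [Finset.sum_ite_eq, if_pos (Finset.mem_univ q.1)]
    · rw [if_neg h]
      refine Finset.sum_eq_zero fun k _ => ?_
      have e : ((k, p'.2) : Fin n × Fin d) ≠ q := fun hc => h (by rw [← hc])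
      rw [Pi.single_eq_of_ne e, mul_zero]

/-- the covariation matrix entries, as a function of the underlying matrix `x` -/
def Cov (n d : ℕ) (x : (Fin n × Fin d) → ℝ) (p q : Fin d × Fin d) : ℝ :=
  (∑ k : Fin n, x (k, p.1) * x (k, q.1)) * (if p.2 = q.2 then 1 else 0)
  + (∑ k : Fin n, x (k, p.1) * x (k, q.2)) * (if p.2 = q.1 then 1 else 0)
  + (∑ k : Fin n, x (k, p.2) * x (k, q.1)) * (if p.1 = q.2 then 1 else 0)
  + (∑ k : Fin n, x (k, p.2) * x (k, q.2)) * (if p.1 = q.1 then 1 else 0)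

lemma ite_sum_mul (a b : Fin d) (u v : Fin d → ℝ) :
    ∑ i : Fin d, (if a = i then u i else 0) * (if b = i then v i else 0)
      = if a = b then u a * v a else 0 := by
  by_cases h : a = b
  · subst h
    rw [if_pos rfl]
    have : ∀ i : Fin d, (if a = i then u i else 0) * (if a = i then v i else 0)
        = if a = i then u i * v i else 0 := by
      intro i; by_cases hi : a = i <;> simp [hi]
    simp only [this]
    rw [Finset.sum_ite_eq, if_pos (Finset.mem_univ a)]
  · rw [if_neg h]
    refine Finset.sum_eq_zero fun i _ => ?_
    by_cases h1 : a = i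
    · have h2 : b ≠ i := fun hc => h (h1.trans hc.symm)
      simp [h2]
    · simp [h1]

lemma sum_coe1_mul (x : (Fin n × Fin d) → ℝ) (p p' : Fin d × Fin d) :
    ∑ q : Fin n × Fin d, coe1 x q p * coe1 x q p' = Cov n d x p p' := by
  rw [Fintype.sum_prod_type]
  have expand : ∀ k : Fin n, ∑ i : Fin d, coe1 x (k, i) p * coe1 x (k, i) p'
      = (if p.1 = p'.1 then x (k, p.2) * x (k, p'.2) else 0)
        + (if p.1 = p'.2 then x (k, p.2) * x (k, p'.1) else 0)
        + (if p.2 = p'.1 then x (k, p.1) * x (k, p'.2) else 0)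
        + (if p.2 = p'.2 then x (k, p.1) * x (k, p'.1) else 0) := by
    intro k
    unfold coe1
    simp only [add_mul, mul_add, Finset.sum_add_distrib]
    rw [ite_sum_mul p.1 p'.1 (fun _ => x (k, p.2)) (fun _ => x (k, p'.2)),
      ite_sum_mul p.1 p'.2 (fun _ => x (k, p.2)) (fun _ => x (k, p'.1)),
      ite_sum_mul p.2 p'.1 (fun _ => x (k, p.1)) (fun _ => x (k, p'.2)),
      ite_sum_mul p.2 p'.2 (fun _ => x (k, p.1)) (fun _ => x (k, p'.1))]
    ring
  simp only [expand]
  rw [Finset.sum_add_distrib, Finset.sum_add_distrib, Finset.sum_add_distrib]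
  have hite : ∀ (a b : Fin d) (u v : Fin d), (∑ k : Fin n, if a = b then x (k, u) * x (k, v) else 0)
      = (∑ k : Fin n, x (k, u) * x (k, v)) * (if a = b then 1 else 0) := by
    intro a b u v; by_cases h : a = b <;> simp [h]
  rw [hite p.1 p'.1 p.2 p'.2, hite p.1 p'.2 p.2 p'.1, hite p.2 p'.1 p.1 p'.2,
    hite p.2 p'.2 p.1 p'.1]
  unfold Cov
  ring

lemma Cov_symm (x : (Fin n × Fin d) → ℝ) (p q : Fin d × Fin d) :
    Cov n d x p q = Cov n d x q p := by
  unfold Cov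
  have hc : ∀ a b : Fin d, ((if a = b then (1:ℝ) else 0)) = (if b = a then 1 else 0) := by
    intro a b; by_cases h : a = b
    · simp [h]
    · simp [h, Ne.symm h]
  have hs : ∀ a b : Fin d, (∑ k : Fin n, x (k, a) * x (k, b)) = ∑ k : Fin n, x (k, b) * x (k, a) :=
    fun a b => Finset.sum_congr rfl fun k _ => mul_comm _ _
  rw [hc p.2 q.2, hc p.2 q.1, hc p.1 q.2, hc p.1 q.1,
    hs p.1 q.1, hs p.1 q.2, hs p.2 q.1, hs p.2 q.2]
  ring

lemma partB (x : (Fin n × Fin d) → ℝ)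
    (D2 : ((Fin d × Fin d) → ℝ) →L[ℝ] ((Fin d × Fin d) → ℝ) →L[ℝ] ℝ) :
    ∑ q : Fin n × Fin d, D2 (Lclm n d x (Pi.single q 1)) (Lclm n d x (Pi.single q 1))
      = ∑ p : Fin d × Fin d, ∑ q : Fin d × Fin d,
          Cov n d x p q * D2 (Pi.single q 1) (Pi.single p 1) := by
  have key : ∀ q : Fin n × Fin d,
      D2 (Lclm n d x (Pi.single q 1)) (Lclm n d x (Pi.single q 1))
        = ∑ p : Fin d × Fin d, ∑ p' : Fin d × Fin d,
            coe1 x q p * coe1 x q p' * D2 (Pi.single p 1) (Pi.single p' 1) := by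
    intro q
    rw [Lclm_single_eq x q]
    rw [map_sum D2 (fun p => coe1 x q p • (Pi.single p 1 : (Fin d × Fin d) → ℝ)) Finset.univ]
    rw [ContinuousLinearMap.sum_apply]
    refine Finset.sum_congr rfl fun p _ => ?_
    rw [map_smul D2 (coe1 x q p) (Pi.single p 1 : (Fin d × Fin d) → ℝ)]
    rw [ContinuousLinearMap.smul_apply]
    rw [map_sum (D2 (Pi.single p 1 : (Fin d × Fin d) → ℝ))
      (fun p' => coe1 x q p' • (Pi.single p' 1 : (Fin d × Fin d) → ℝ)) Finset.univ]
    rw [smul_eq_mul, Finset.mul_sum]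
    refine Finset.sum_congr rfl fun p' _ => ?_
    rw [_root_.map_smul, smul_eq_mul]
    ring
  calc ∑ q : Fin n × Fin d, D2 (Lclm n d x (Pi.single q 1)) (Lclm n d x (Pi.single q 1))
      = ∑ p : Fin d × Fin d, ∑ p' : Fin d × Fin d,
          Cov n d x p p' * D2 (Pi.single p 1) (Pi.single p' 1) := by
        simp only [key]
        rw [Finset.sum_comm]
        refine Finset.sum_congr rfl fun p _ => ?_
        rw [Finset.sum_comm]
        refine Finset.sum_congr rfl fun p' _ => ?_
        rw [← Finset.sum_mul, sum_coe1_mul]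
    _ = ∑ p' : Fin d × Fin d, ∑ p : Fin d × Fin d,
          Cov n d x p p' * D2 (Pi.single p 1) (Pi.single p' 1) := Finset.sum_comm
    _ = ∑ p : Fin d × Fin d, ∑ q : Fin d × Fin d,
          Cov n d x p q * D2 (Pi.single q 1) (Pi.single p 1) := by
        refine Finset.sum_congr rfl fun p _ => Finset.sum_congr rfl fun q _ => ?_
        rw [Cov_symm]

end parts

section main
variable {n d : ℕ}

lemma integrand_eq {f : ((Fin d × Fin d) → ℝ) → ℝ} (hf : ContDiff ℝ 2 f)
    (x : (Fin n × Fin d) → ℝ) :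
    ((∑ q : Fin n × Fin d, (0:ℝ) * fderiv ℝ (fun b => f (Qmap n d b)) x (Pi.single q 1)) +
      (1/2 : ℝ) * ∑ q : Fin n × Fin d, ∑ r : Fin n × Fin d,
        (1 : Matrix (Fin n × Fin d) (Fin n × Fin d) ℝ) q r *
          fderiv ℝ (fun y => fderiv ℝ (fun b => f (Qmap n d b)) y (Pi.single q 1)) x
            (Pi.single r 1))
    = ((∑ p : Fin d × Fin d, (if p.1 = p.2 then (n:ℝ) else 0) *
          fderiv ℝ f (Qmap n d x) (Pi.single p 1)) +
      (1/2 : ℝ) * ∑ p : Fin d × Fin d, ∑ q : Fin d × Fin d,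
        Cov n d x p q *
          fderiv ℝ (fun y => fderiv ℝ f y (Pi.single p 1)) (Qmap n d x) (Pi.single q 1)) := by
  have hzero : (∑ q : Fin n × Fin d,
      (0:ℝ) * fderiv ℝ (fun b => f (Qmap n d b)) x (Pi.single q 1)) = 0 := by simp
  rw [hzero, zero_add]
  have hid : (∑ q : Fin n × Fin d, ∑ r : Fin n × Fin d,
      (1 : Matrix (Fin n × Fin d) (Fin n × Fin d) ℝ) q r *
        fderiv ℝ (fun y => fderiv ℝ (fun b => f (Qmap n d b)) y (Pi.single q 1)) x
          (Pi.single r 1))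
      = ∑ q : Fin n × Fin d,
          fderiv ℝ (fun y => fderiv ℝ (fun b => f (Qmap n d b)) y (Pi.single q 1)) x
            (Pi.single q 1) := by
    refine Finset.sum_congr rfl fun q _ => ?_
    simp only [Matrix.one_apply, ite_mul, one_mul, zero_mul]
    rw [Finset.sum_ite_eq, if_pos (Finset.mem_univ q)]
  rw [hid]
  have h2 : ∀ q : Fin n × Fin d,
      fderiv ℝ (fun y => fderiv ℝ (fun b => f (Qmap n d b)) y (Pi.single q 1)) x
          (Pi.single q 1)
        = fderiv ℝ f (Qmap n d x) (Lclm n d (Pi.single q 1) (Pi.single q 1))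
          + fderiv ℝ (fderiv ℝ f) (Qmap n d x) (Lclm n d x (Pi.single q 1))
              (Lclm n d x (Pi.single q 1)) :=
    fun q => fderiv2_comp_Qmap hf x (Pi.single q 1) (Pi.single q 1)
  simp only [h2]
  rw [Finset.sum_add_distrib, mul_add]
  have h3 : ∀ p q : Fin d × Fin d,
      fderiv ℝ (fun y => fderiv ℝ f y (Pi.single p 1)) (Qmap n d x) (Pi.single q 1)
        = fderiv ℝ (fderiv ℝ f) (Qmap n d x) (Pi.single q 1) (Pi.single p 1) :=
    fun p q => fderiv_apply_const hf (Qmap n d x) (Pi.single p 1) (Pi.single q 1)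
  simp only [h3]
  rw [partA (fderiv ℝ f (Qmap n d x)), partB x (fderiv ℝ (fderiv ℝ f) (Qmap n d x))]


/-- if `B` is an `n × d` matrix of independent standard Brownian motions
(formulated as the martingale problem with zero drift and identity diffusion matrix), then
`X_t = B_tᵀ B_t` is a positive semidefinite matrix-valued process satisfying the Wishart SDE
`dX_t = n I_d dt + √(X_t) dW_t + dW_tᵀ √(X_t)`, i.e. `X` is the Wishart process
`WIS_d(B₀ᵀB₀, n, 0, I_d)`; the SDE is expressed as the martingale problem with drift `n I_d`
and quadratic covariation rate
`d⟨X_{ij}, X_{kl}⟩ = (X_{ik} δ_{jl} + X_{il} δ_{jk} + X_{jk} δ_{il} + X_{jl} δ_{ik}) dt`. -/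
theorem matrix_brownian_square_is_wishart
    {Ω : Type*} [m : MeasurableSpace Ω] (μ : Measure Ω) [IsProbabilityMeasure μ]
    (n d : ℕ) (hn : 0 < n) (hd : 0 < d)
    (F : Filtration ℝ m) (B : ℝ → Ω → Fin n × Fin d → ℝ)
    (hBM : SolvesSDEVec F B (fun _ _ _ => (0 : ℝ)) (fun _ _ => (1 : Matrix _ _ ℝ)) μ)
    (hstart : ∀ᵐ ω ∂μ, ∀ p, B 0 ω p = 0) :
    (∀ t ω, Matrix.PosSemidef
        (Matrix.of fun i j : Fin d => ∑ k : Fin n, B t ω (k, i) * B t ω (k, j)))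
      ∧ SolvesSDEVec F
          (fun t ω (p : Fin d × Fin d) => ∑ k : Fin n, B t ω (k, p.1) * B t ω (k, p.2))
          (fun _ _ p => if p.1 = p.2 then (n : ℝ) else 0)
          (fun t ω => Matrix.of fun p q : Fin d × Fin d =>
            (∑ k : Fin n, B t ω (k, p.1) * B t ω (k, q.1)) * (if p.2 = q.2 then 1 else 0)
            + (∑ k : Fin n, B t ω (k, p.1) * B t ω (k, q.2)) * (if p.2 = q.1 then 1 else 0)
            + (∑ k : Fin n, B t ω (k, p.2) * B t ω (k, q.1)) * (if p.1 = q.2 then 1 else 0)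
            + (∑ k : Fin n, B t ω (k, p.2) * B t ω (k, q.2)) * (if p.1 = q.1 then 1 else 0))
          μ := by
  refine ⟨?_, ?_⟩
  · intro t ω
    have hmat : (Matrix.of fun i j : Fin d => ∑ k : Fin n, B t ω (k, i) * B t ω (k, j))
        = Matrix.conjTranspose (Matrix.of fun (k : Fin n) (i : Fin d) => B t ω (k, i))
          * (Matrix.of fun (k : Fin n) (i : Fin d) => B t ω (k, i)) := by
      ext i j
      simp [Matrix.mul_apply, Matrix.conjTranspose_apply]
    rw [hmat]
    exact Matrix.posSemidef_conjTranspose_mul_self _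
  · intro f hf
    have hg : ContDiff ℝ 2 (fun b => f (Qmap n d b)) := hf.comp contDiff_Qmap
    have h := hBM (fun b => f (Qmap n d b)) hg
    have h2 : IsLocalMartingale F
        (fun t ω => f (Qmap n d (B t ω)) -
          ∫ s in (0:ℝ)..t,
            ((∑ i : Fin n × Fin d, (0:ℝ) *
                fderiv ℝ (fun b => f (Qmap n d b)) (B s ω) (Pi.single i 1)) +
              (1/2 : ℝ) * ∑ i : Fin n × Fin d, ∑ j : Fin n × Fin d,
                (1 : Matrix (Fin n × Fin d) (Fin n × Fin d) ℝ) i j *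
                  fderiv ℝ (fun y => fderiv ℝ (fun b => f (Qmap n d b)) y (Pi.single i 1))
                    (B s ω) (Pi.single j 1))) μ := h
    have heq : (fun t ω => f (Qmap n d (B t ω)) -
          ∫ s in (0:ℝ)..t,
            ((∑ i : Fin n × Fin d, (0:ℝ) *
                fderiv ℝ (fun b => f (Qmap n d b)) (B s ω) (Pi.single i 1)) +
              (1/2 : ℝ) * ∑ i : Fin n × Fin d, ∑ j : Fin n × Fin d,
                (1 : Matrix (Fin n × Fin d) (Fin n × Fin d) ℝ) i j *
                  fderiv ℝ (fun y => fderiv ℝ (fun b => f (Qmap n d b)) y (Pi.single i 1))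
                    (B s ω) (Pi.single j 1)))
        = (fun t ω => f (Qmap n d (B t ω)) -
          ∫ s in (0:ℝ)..t,
            ((∑ p : Fin d × Fin d, (if p.1 = p.2 then (n:ℝ) else 0) *
                fderiv ℝ f (Qmap n d (B s ω)) (Pi.single p 1)) +
              (1/2 : ℝ) * ∑ p : Fin d × Fin d, ∑ q : Fin d × Fin d,
                Cov n d (B s ω) p q *
                  fderiv ℝ (fun y => fderiv ℝ f y (Pi.single p 1)) (Qmap n d (B s ω))
                    (Pi.single q 1))) := by
      funext t ω
      congr 1
      apply intervalIntegral.integral_congr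
      intro s _
      exact integrand_eq hf (B s ω)
    rw [heq] at h2
    exact h2
end main
end

section
/- Specialize the squared Bessel case: for the PDE $u_t = 2x u_{xx} + \delta u_x$ (i.e. $b=2$, $\gamma=1$, $f = \delta$, $g = 0$), the drift $h(x) = \delta$ satisfies the Riccati condition $bxh' - bh + \tfrac12 h^2 = B$ with $A=0$, $B = \tfrac12\delta^2 - 2\delta$, and the resulting symmetry solution with $u_0 = 1$ is $\overline{U}_\varepsilon(x,t) = (1+4\varepsilon t)^{-\delta/2}\exp\{-\tfrac{4\varepsilon x}{2(1+4\varepsilon t)}\}$; in particular $\overline{U}_\varepsilon$ solves $u_t = 2xu_{xx} + \delta u_x$ for all $\varepsilon$ with $1 + 4\varepsilon t > 0$. -/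
open Real Set

noncomputable section

/-- the squared Bessel specialization of the Lie symmetry. For the PDE
`u_t = 2x u_xx + δ u_x` (i.e. `b = 2`, `γ = 1`, `f = δ`, `g = 0`), the constant drift
`h(x) = δ` satisfies the Riccati condition `b x h' - b h + h²/2 = B` with `A = 0`,
`B = δ²/2 - 2δ`, and the symmetry solution obtained from the stationary solution `u₀ = 1`,
`Ū_ε(x,t) = (1+4εt)^{-δ/2} exp(-4εx/(2(1+4εt)))`, solves `u_t = 2x u_xx + δ u_x`
for all `ε` with `1 + 4εt > 0`. -/
theorem squaredBessel_lie_symmetry_solution (δ : ℝ) :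
    (∀ x : ℝ, 0 < x →
      2 * x * deriv (fun _ : ℝ => δ) x - 2 * δ + δ ^ 2 / 2 = δ ^ 2 / 2 - 2 * δ)
    ∧ ∀ ε x t : ℝ, 0 < x → 0 ≤ t → 0 < 1 + 4 * ε * t →
      deriv (fun τ => (1 + 4 * ε * τ) ^ (-(δ / 2)) *
          Real.exp (-(4 * ε * x) / (2 * (1 + 4 * ε * τ)))) t
        = 2 * x * iteratedDeriv 2
            (fun y => (1 + 4 * ε * t) ^ (-(δ / 2)) *
              Real.exp (-(4 * ε * y) / (2 * (1 + 4 * ε * t)))) x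
          + δ * deriv
              (fun y => (1 + 4 * ε * t) ^ (-(δ / 2)) *
                Real.exp (-(4 * ε * y) / (2 * (1 + 4 * ε * t)))) x := by
  constructor
  · intro x hx
    simp [deriv_const]
    ring
  · intro ε x t hx ht hc
    set c : ℝ := 1 + 4 * ε * t with hcdef
    have hc0 : c ≠ 0 := ne_of_gt hc
    have h2c0 : (2 : ℝ) * c ≠ 0 := by positivity
    -- first derivative in x at an arbitrary point
    have hfd : ∀ y : ℝ,
        HasDerivAt (fun y => c ^ (-(δ / 2)) * Real.exp (-(4 * ε * y) / (2 * c)))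
          (c ^ (-(δ / 2)) * (Real.exp (-(4 * ε * y) / (2 * c)) * (-(4 * ε) / (2 * c)))) y := by
      intro y
      have h1 : HasDerivAt (fun y : ℝ => -(4 * ε * y) / (2 * c)) (-(4 * ε) / (2 * c)) y := by
        simpa using (((hasDerivAt_id y).const_mul (4 * ε)).neg.div_const (2 * c))
      exact h1.exp.const_mul _
    have hdf : deriv (fun y => c ^ (-(δ / 2)) * Real.exp (-(4 * ε * y) / (2 * c)))
        = fun y => c ^ (-(δ / 2)) * (Real.exp (-(4 * ε * y) / (2 * c)) * (-(4 * ε) / (2 * c))) :=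
      funext fun y => (hfd y).deriv
    -- second derivative in x at x
    have hfd2 : HasDerivAt
        (fun y => c ^ (-(δ / 2)) * (Real.exp (-(4 * ε * y) / (2 * c)) * (-(4 * ε) / (2 * c))))
        (c ^ (-(δ / 2)) * ((Real.exp (-(4 * ε * x) / (2 * c)) * (-(4 * ε) / (2 * c)))
          * (-(4 * ε) / (2 * c)))) x := by
      have h1 : HasDerivAt (fun y : ℝ => -(4 * ε * y) / (2 * c)) (-(4 * ε) / (2 * c)) x := by
        simpa using (((hasDerivAt_id x).const_mul (4 * ε)).neg.div_const (2 * c))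
      exact (h1.exp.mul_const _).const_mul _
    -- derivative in t
    have ha : HasDerivAt (fun τ : ℝ => 1 + 4 * ε * τ) (4 * ε) t := by
      simpa using (((hasDerivAt_id t).const_mul (4 * ε)).const_add 1)
    have hrpow : HasDerivAt (fun τ : ℝ => (1 + 4 * ε * τ) ^ (-(δ / 2)))
        ((-(δ / 2)) * c ^ (-(δ / 2) - 1) * (4 * ε)) t := by
      have := (Real.hasDerivAt_rpow_const (x := c) (p := -(δ / 2)) (Or.inl hc0)).comp t ha
      simpa [hcdef, mul_comm, mul_assoc, Function.comp_def] using this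
    have hinner : HasDerivAt (fun τ : ℝ => -(4 * ε * x) / (2 * (1 + 4 * ε * τ)))
        ((0 * (2 * c) - (-(4 * ε * x)) * (2 * (4 * ε))) / (2 * c) ^ 2) t := by
      exact (hasDerivAt_const t (-(4 * ε * x))).div (ha.const_mul 2) h2c0
    have hF : HasDerivAt (fun τ => (1 + 4 * ε * τ) ^ (-(δ / 2)) *
        Real.exp (-(4 * ε * x) / (2 * (1 + 4 * ε * τ))))
        (((-(δ / 2)) * c ^ (-(δ / 2) - 1) * (4 * ε)) * Real.exp (-(4 * ε * x) / (2 * c))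
          + c ^ (-(δ / 2)) * (Real.exp (-(4 * ε * x) / (2 * c))
            * ((0 * (2 * c) - (-(4 * ε * x)) * (2 * (4 * ε))) / (2 * c) ^ 2))) t :=
      hrpow.mul hinner.exp
    rw [hF.deriv]
    rw [iteratedDeriv_succ, iteratedDeriv_one, hdf,
      hfd2.deriv]
    beta_reduce
    have hsub : c ^ (-(δ / 2) - 1) = c ^ (-(δ / 2)) / c := by
      rw [Real.rpow_sub hc, Real.rpow_one]
    rw [hsub]
    field_simp
    ring
end
end
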